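/- Let P be an N×N real orthogonal matrix with det(P) = 1, let s = {s₁,...,s_k} and t = {t₁,...,t_k} be two k-element subsets of {1,...,N} (with fixed enumerations), and let σ be a permutation of {1,...,k}. Then ∑_{τ∈S_N : τ(s_j) = t_{σ(j)} ∀j=1,...,k} ε(τ) ∏_{j=1}^N p_{jτ(j)} = ε(σ) · det(P_{st}) · ∏_{j=1}^k p_{s_j t_{σ(j)}}, where P_{st} is the k×k submatrix of P with rows s₁,...,s_k and columns t₁,...,t_k (in those orders). When P diagonalizes a symmetric matrix A with distinct eigenvalues, the left-hand side is the joint probability ℙ(X_{s₁} = λ_{t_{σ(1)}}, ..., X_{s_k} = λ_{t_{σ(k)}}) under the joint spectral measure. -/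

import Mathlib

open Matrix BigOperators

/-- Multivariate marginal distributions of the joint spectral measure: for an orthogonal
matrix `P` with `det(P) = 1`, subsets `s = {s₁,...,s_k}` and `t = {t₁,...,t_k}` (given by
injective enumerations), and a permutation `σ` of `{1,...,k}`,
`∑_{τ : τ(s_j) = t_{σ(j)} ∀j} ε(τ) ∏_j p_{jτ(j)} = ε(σ) det(P_{st}) ∏_j p_{s_j t_{σ(j)}}`. -/
theorem multivariate_marginal (N k : ℕ)
    (P : Matrix (Fin N) (Fin N) ℝ)
    (horth : P * Pᵀ = 1)
    (hdet : P.det = 1)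
    (s t : Fin k → Fin N)
    (hs : Function.Injective s) (ht : Function.Injective t)
    (σ : Equiv.Perm (Fin k)) :
    ∑ τ ∈ Finset.univ.filter
        (fun τ : Equiv.Perm (Fin N) => ∀ j : Fin k, τ (s j) = t (σ j)),
        ((Equiv.Perm.sign τ : ℤ) : ℝ) * ∏ j : Fin N, P j (τ j)
      = ((Equiv.Perm.sign σ : ℤ) : ℝ) * Matrix.det (P.submatrix s t) *
          ∏ j : Fin k, P (s j) (t (σ j)) := by
  classical
  set c : ℝ := ∏ j : Fin k, P (s j) (t (σ j)) with hc
  set Q : Matrix (Fin N) (Fin N) ℝ := fun i m =>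
    if h : ∃ j, s j = i then (if m = t (σ h.choose) then (1:ℝ) else 0) else P i m with hQ
  have hchoose : ∀ j : Fin k, ∀ h : ∃ j', s j' = s j, h.choose = j := by
    intro j h
    exact hs h.choose_spec
  -- Step 1: LHS = c * det Q
  have step1 : ∑ τ ∈ Finset.univ.filter
        (fun τ : Equiv.Perm (Fin N) => ∀ j : Fin k, τ (s j) = t (σ j)),
        ((Equiv.Perm.sign τ : ℤ) : ℝ) * ∏ j : Fin N, P j (τ j) = c * Q.det := by
    rw [← Matrix.det_transpose Q, Matrix.det_apply']
    have hsum : ∀ τ : Equiv.Perm (Fin N),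
        (((Equiv.Perm.sign τ : ℤ) : ℝ)) * ∏ i : Fin N, Qᵀ (τ i) i
          = (((Equiv.Perm.sign τ : ℤ) : ℝ)) * ∏ i : Fin N, Q i (τ i) := by
      intro τ
      simp [Matrix.transpose_apply]
    rw [Finset.sum_congr rfl (fun τ _ => hsum τ)]
    rw [Finset.mul_sum]
    rw [← Finset.sum_filter_add_sum_filter_not Finset.univ
      (fun τ : Equiv.Perm (Fin N) => ∀ j : Fin k, τ (s j) = t (σ j))]
    have hzero : ∑ τ ∈ Finset.univ.filter
        (fun τ : Equiv.Perm (Fin N) => ¬ ∀ j : Fin k, τ (s j) = t (σ j)),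
        c * ((((Equiv.Perm.sign τ : ℤ) : ℝ)) * ∏ i : Fin N, Q i (τ i)) = 0 := by
      apply Finset.sum_eq_zero
      intro τ hτ
      rw [Finset.mem_filter] at hτ
      push_neg at hτ
      obtain ⟨j, hj⟩ := hτ.2
      have : ∏ i : Fin N, Q i (τ i) = 0 := by
        apply Finset.prod_eq_zero (Finset.mem_univ (s j))
        have hex : ∃ j', s j' = s j := ⟨j, rfl⟩
        rw [hQ]
        simp only [dif_pos hex, hchoose j hex]
        rw [if_neg hj]
      rw [this]; ring
    rw [hzero, add_zero]
    apply Finset.sum_congr rfl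
    intro τ hτ
    rw [Finset.mem_filter] at hτ
    have hτ2 := hτ.2
    -- show c * ∏ Q = ∏ P for such τ
    have hQprod : ∏ i : Fin N, Q i (τ i) = ∏ i ∈ (Finset.univ.image s)ᶜ, P i (τ i) := by
      rw [← Finset.prod_mul_prod_compl (Finset.univ.image s) (fun i => Q i (τ i))]
      have h1 : ∏ i ∈ Finset.univ.image s, Q i (τ i) = 1 := by
        apply Finset.prod_eq_one
        intro i hi
        rw [Finset.mem_image] at hi
        obtain ⟨j, _, rfl⟩ := hi
        have hex : ∃ j', s j' = s j := ⟨j, rfl⟩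
        rw [hQ]
        simp only [dif_pos hex, hchoose j hex]
        rw [if_pos (hτ2 j)]
      have h2 : ∏ i ∈ (Finset.univ.image s)ᶜ, Q i (τ i)
          = ∏ i ∈ (Finset.univ.image s)ᶜ, P i (τ i) := by
        apply Finset.prod_congr rfl
        intro i hi
        rw [Finset.mem_compl, Finset.mem_image] at hi
        push_neg at hi
        have hne : ¬ ∃ j, s j = i := by
          rintro ⟨j, rfl⟩
          exact hi j (Finset.mem_univ j) rfl
        rw [hQ]; simp only [dif_neg hne]
      rw [h1, h2, one_mul]
    have hPprod : ∏ i : Fin N, P i (τ i) = c * ∏ i ∈ (Finset.univ.image s)ᶜ, P i (τ i) := by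
      rw [← Finset.prod_mul_prod_compl (Finset.univ.image s) (fun i => P i (τ i))]
      congr 1
      rw [Finset.prod_image (fun a _ b _ h => hs h), hc]
      apply Finset.prod_congr rfl
      intro j _
      rw [hτ2 j]
    rw [hQprod, hPprod]; ring
  -- the "row-replaced identity" matrix M = Q * Pᵀ
  set M : Matrix (Fin N) (Fin N) ℝ := fun i l =>
    if h : ∃ j, s j = i then P l (t (σ h.choose)) else (if i = l then (1:ℝ) else 0) with hM
  have step2 : Q * Pᵀ = M := by
    ext i l
    rw [Matrix.mul_apply, hM]
    by_cases h : ∃ j, s j = i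
    · simp only [dif_pos h]
      rw [hQ]
      simp only [dif_pos h, Matrix.transpose_apply, ite_mul, one_mul, zero_mul]
      rw [Finset.sum_ite_eq' Finset.univ (t (σ h.choose)) (fun m => P l m)]
      simp
    · simp only [dif_neg h]
      have : ∑ m : Fin N, Q i m * Pᵀ m l = (P * Pᵀ) i l := by
        rw [Matrix.mul_apply]
        apply Finset.sum_congr rfl
        intro m _
        rw [hQ]; simp only [dif_neg h]
      rw [this, horth, Matrix.one_apply]
  -- Step 3: det M = sign σ * det (P.submatrix s t)
  have step3 : M.det = ((Equiv.Perm.sign σ : ℤ) : ℝ) * (P.submatrix s t).det := by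
    let e : (Fin k) ⊕ {x : Fin N // x ∉ Set.range s} ≃ Fin N :=
      (Equiv.sumCongr (Equiv.ofInjective s hs) (Equiv.refl _)).trans
        (Equiv.sumCompl (· ∈ Set.range s))
    have he1 : ∀ j : Fin k, e (Sum.inl j) = s j := fun j => rfl
    have he2 : ∀ x : {x : Fin N // x ∉ Set.range s}, e (Sum.inr x) = x.val := fun x => rfl
    rw [← Matrix.det_submatrix_equiv_self e M]
    have hblocks : M.submatrix e e =
        Matrix.fromBlocks (fun j i => P (s i) (t (σ j)))
          (fun j x => P x.val (t (σ j))) 0 1 := by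
      ext i l
      cases i with
      | inl j =>
        cases l with
        | inl i =>
          simp only [Matrix.submatrix_apply, he1, Matrix.fromBlocks_apply₁₁]
          have hex : ∃ j', s j' = s j := ⟨j, rfl⟩
          rw [hM]; simp only [dif_pos hex, hchoose j hex]
          rfl
        | inr x =>
          simp only [Matrix.submatrix_apply, he1, he2, Matrix.fromBlocks_apply₁₂]
          have hex : ∃ j', s j' = s j := ⟨j, rfl⟩
          rw [hM]; simp only [dif_pos hex, hchoose j hex]
          rfl
      | inr x =>
        cases l with
        | inl i =>
          simp only [Matrix.submatrix_apply, he1, he2, Matrix.fromBlocks_apply₂₁]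
          have hne : ¬ ∃ j, s j = x.val := by
            rintro ⟨j, hj⟩
            exact x.property ⟨j, hj⟩
          rw [hM]; simp only [dif_neg hne]
          rw [if_neg]
          · rfl
          · intro h
            exact x.property ⟨i, h.symm⟩
        | inr y =>
          simp only [Matrix.submatrix_apply, he2, Matrix.fromBlocks_apply₂₂]
          have hne : ¬ ∃ j, s j = x.val := by
            rintro ⟨j, hj⟩
            exact x.property ⟨j, hj⟩
          rw [hM]; simp only [dif_neg hne]
          show _ = (1 : Matrix _ _ ℝ) x y
          rw [Matrix.one_apply]
          by_cases hxy : x = y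
          · rw [if_pos hxy, if_pos (by rw [hxy])]
          · rw [if_neg hxy, if_neg (fun h => hxy (Subtype.ext h))]
    rw [hblocks]; erw [Matrix.det_fromBlocks_zero₂₁]; rw [Matrix.det_one, mul_one]
    have : (fun j i => P (s i) (t (σ j))) = ((P.submatrix s t)ᵀ).submatrix σ id := by
      ext j i
      simp [Matrix.submatrix_apply, Matrix.transpose_apply]
    rw [this, Matrix.det_permute, Matrix.det_transpose]
  -- assemble
  have hdetT : Pᵀ.det = 1 := by rw [Matrix.det_transpose, hdet]
  have hQdet : Q.det = ((Equiv.Perm.sign σ : ℤ) : ℝ) * (P.submatrix s t).det := by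
    calc Q.det = Q.det * Pᵀ.det := by rw [hdetT, mul_one]
    _ = (Q * Pᵀ).det := (Matrix.det_mul Q Pᵀ).symm
    _ = M.det := by rw [step2]
    _ = _ := step3
  rw [step1, hQdet]; ring
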